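/- Let $a, b, c$ be pairwise distinct complex numbers in the closed upper half unit disk with $1 - ba \ne 0$ and $1 - bc \ne 0$, and set $k = \frac{c-b}{a-b}$. Then $\frac{1}{5(1 + 1/|k|)} \le \left|\frac{1-bc}{1-ba}\right| \le 5(1+|k|)$. -/

import Mathlib

open Complex

lemma key_ineq (a b : ℂ) (ha : ‖a‖ ≤ 1) (ha' : 0 ≤ a.im)
    (hb : ‖b‖ ≤ 1) (hb' : 0 ≤ b.im) :
    ‖a - b‖ ≤ ‖1 - a * b‖ := by
  rw [Complex.norm_def, Complex.norm_def]
  apply Real.sqrt_le_sqrt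
  have h1 : a.re^2 + a.im^2 ≤ 1 := by
    have := Complex.sq_norm a
    rw [Complex.normSq_apply] at this
    nlinarith [norm_nonneg a]
  have h2 : b.re^2 + b.im^2 ≤ 1 := by
    have := Complex.sq_norm b
    rw [Complex.normSq_apply] at this
    nlinarith [norm_nonneg b]
  simp only [Complex.normSq_apply, Complex.sub_re, Complex.sub_im, Complex.one_re,
    Complex.one_im, Complex.mul_re, Complex.mul_im]
  nlinarith [mul_nonneg ha' hb', mul_nonneg (sub_nonneg.2 h1) (sub_nonneg.2 h2)]

lemma upper_bound (a b c : ℂ)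
    (ha : ‖a‖ ≤ 1) (ha' : 0 ≤ a.im)
    (hb : ‖b‖ ≤ 1) (hb' : 0 ≤ b.im)
    (hab : a ≠ b)
    (hden : 1 - b * a ≠ 0) :
    ‖(1 - b * c) / (1 - b * a)‖
        ≤ 5 * (1 + ‖(c - b) / (a - b)‖) := by
  have hab' : a - b ≠ 0 := sub_ne_zero.2 hab
  set k : ℂ := (c - b) / (a - b) with hk
  have hid : 1 - b * c = k * (1 - b * a) + (1 - k) * (1 - b ^ 2) := by
    rw [hk]; field_simp
    ring
  -- |1 - b^2| ≤ 2 |1 - b a|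
  have hba : ‖a - b‖ ≤ ‖1 - b * a‖ := by
    rw [mul_comm]; exact key_ineq a b ha ha' hb hb'
  have hbsq : ‖1 - b ^ 2‖ ≤ 2 * ‖1 - b * a‖ := by
    have : (1 : ℂ) - b ^ 2 = (1 - b * a) + b * (a - b) := by ring
    rw [this]
    calc ‖(1 - b * a) + b * (a - b)‖
        ≤ ‖1 - b * a‖ + ‖b * (a - b)‖ := norm_add_le _ _
      _ ≤ ‖1 - b * a‖ + ‖a - b‖ := by
          rw [norm_mul]
          have : ‖b‖ * ‖a - b‖ ≤ 1 * ‖a - b‖ :=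
            mul_le_mul_of_nonneg_right hb (norm_nonneg _)
          linarith
      _ ≤ 2 * ‖1 - b * a‖ := by linarith
  have hnum : ‖1 - b * c‖
      ≤ (5 * (1 + ‖k‖)) * ‖1 - b * a‖ := by
    rw [hid]
    calc ‖k * (1 - b * a) + (1 - k) * (1 - b ^ 2)‖
        ≤ ‖k‖ * ‖1 - b * a‖
          + ‖1 - k‖ * ‖1 - b ^ 2‖ := by
          rw [← norm_mul, ← norm_mul]; exact norm_add_le _ _
      _ ≤ ‖k‖ * ‖1 - b * a‖
          + (1 + ‖k‖) * (2 * ‖1 - b * a‖) := by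
          have h1k : ‖1 - k‖ ≤ 1 + ‖k‖ := by
            simpa [← sub_eq_add_neg] using norm_add_le 1 (-k)
          have := mul_le_mul h1k hbsq (norm_nonneg _)
            (by positivity)
          linarith
      _ ≤ (5 * (1 + ‖k‖)) * ‖1 - b * a‖ := by
          nlinarith [norm_nonneg k, norm_nonneg (1 - b * a)]
  rw [norm_div, div_le_iff₀ (norm_pos_iff.mpr hden)]
  · linarith

theorem stmt_6 (a b c : ℂ)
    (ha : ‖a‖ ≤ 1) (ha' : 0 ≤ a.im)
    (hb : ‖b‖ ≤ 1) (hb' : 0 ≤ b.im)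
    (hc : ‖c‖ ≤ 1) (hc' : 0 ≤ c.im)
    (hab : a ≠ b) (hbc : b ≠ c) (hac : a ≠ c)
    (hden : 1 - b * a ≠ 0) (hden' : 1 - b * c ≠ 0) :
    1 / (5 * (1 + 1 / ‖(c - b) / (a - b)‖))
        ≤ ‖(1 - b * c) / (1 - b * a)‖ ∧
    ‖(1 - b * c) / (1 - b * a)‖
        ≤ 5 * (1 + ‖(c - b) / (a - b)‖) := by
  constructor
  · -- lower bound from symmetric upper bound
    have hcb : c ≠ b := hbc.symm
    have h := upper_bound c b a hc hc' hb hb' hcb hden'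
    have habne : a - b ≠ 0 := sub_ne_zero.2 hab
    have hcbne : c - b ≠ 0 := sub_ne_zero.2 hcb
    have hrw : ‖(a - b) / (c - b)‖
        = 1 / ‖(c - b) / (a - b)‖ := by
      rw [norm_div, norm_div, one_div, inv_div]
    rw [hrw] at h
    have hX : 0 < ‖(1 - b * a) / (1 - b * c)‖ := by
      apply norm_pos_iff.mpr
      exact div_ne_zero hden hden'
    have hXinv : ‖(1 - b * c) / (1 - b * a)‖
        = 1 / ‖(1 - b * a) / (1 - b * c)‖ := by
      rw [norm_div, norm_div, one_div, inv_div]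
    rw [hXinv]
    exact one_div_le_one_div_of_le hX h
  · exact upper_bound a b c ha ha' hb hb' hab hden
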